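/- For 0 < q < p ≤ 1, x ∈ [0,1], and n ≥ 1, the identity ∑_{k=0}^{n} [n choose k]_{p,q} p^{k(k-1)/2} x^k ∏_{s=0}^{n-k-1} (p^s − q^s x) = p^{n(n-1)/2} holds. -/

import Mathlib

open Finset

noncomputable def pqInt (p q : ℝ) (m : ℕ) : ℝ :=
  ∑ i ∈ Finset.range m, p ^ (m - 1 - i) * q ^ i

noncomputable def pqFact (p q : ℝ) (n : ℕ) : ℝ :=
  ∏ j ∈ Finset.range n, pqInt p q (j + 1)

noncomputable def pqChoose (p q : ℝ) (n k : ℕ) : ℝ :=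
  pqFact p q n / (pqFact p q k * pqFact p q (n - k))

noncomputable def pqBasis (p q : ℝ) (n k : ℕ) (x : ℝ) : ℝ :=
  pqChoose p q n k * (p ^ (k * (k - 1) / 2) / p ^ (n * (n - 1) / 2)) * x ^ k *
    ∏ s ∈ Finset.range (n - k), (p ^ s - q ^ s * x)

noncomputable def pqNode (p q α β : ℝ) (n k : ℕ) : ℝ :=
  (p ^ (n - k) * pqInt p q k + α) / (pqInt p q n + β)

noncomputable def pqStancu (p q α β : ℝ) (n : ℕ) (f : ℝ → ℝ) (x : ℝ) : ℝ :=
  ∑ k ∈ Finset.range (n + 1), pqBasis p q n k x * f (pqNode p q α β n k)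

lemma pqInt_pos {p q : ℝ} (hp : 0 < p) (hq : 0 < q) (m : ℕ) : 0 < pqInt p q (m + 1) := by
  unfold pqInt
  exact Finset.sum_pos (fun i _ => by positivity) nonempty_range_add_one

lemma pqInt_comm (p q : ℝ) (m : ℕ) : pqInt p q m = pqInt q p m := by
  unfold pqInt
  rw [← Finset.sum_range_reflect]
  refine Finset.sum_congr rfl fun i hi => ?_
  rw [mem_range] at hi
  rw [mul_comm]
  congr 2
  omega

lemma pqInt_add (p q : ℝ) (a b : ℕ) :
    pqInt p q (a + b) = p ^ b * pqInt p q a + q ^ a * pqInt p q b := by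
  unfold pqInt
  rw [Finset.sum_range_add, Finset.mul_sum, Finset.mul_sum]
  congr 1
  · refine Finset.sum_congr rfl fun i hi => ?_
    rw [mem_range] at hi
    rw [← mul_assoc, ← pow_add]
    congr 2
    omega
  · refine Finset.sum_congr rfl fun i hi => ?_
    rw [mem_range] at hi
    have h1 : a + b - 1 - (a + i) = b - 1 - i := by omega
    rw [h1, pow_add]
    ring

lemma pqInt_split (p q : ℝ) (a b : ℕ) :
    pqInt p q (a + b) = q ^ b * pqInt p q a + p ^ a * pqInt p q b := by
  rw [pqInt_comm, pqInt_add, pqInt_comm q p a, pqInt_comm q p b]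

lemma pqFact_pos {p q : ℝ} (hp : 0 < p) (hq : 0 < q) (n : ℕ) : 0 < pqFact p q n := by
  unfold pqFact
  exact Finset.prod_pos fun j _ => pqInt_pos hp hq j

lemma pqFact_succ (p q : ℝ) (n : ℕ) :
    pqFact p q (n + 1) = pqFact p q n * pqInt p q (n + 1) :=
  Finset.prod_range_succ _ _

lemma pqChoose_zero {p q : ℝ} (hp : 0 < p) (hq : 0 < q) (n : ℕ) : pqChoose p q n 0 = 1 := by
  unfold pqChoose
  simp only [Nat.sub_zero]
  rw [show pqFact p q 0 = 1 from Finset.prod_range_zero _, one_mul,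
    div_self (pqFact_pos hp hq n).ne']

lemma pqChoose_self {p q : ℝ} (hp : 0 < p) (hq : 0 < q) (n : ℕ) : pqChoose p q n n = 1 := by
  unfold pqChoose
  rw [Nat.sub_self, show pqFact p q 0 = 1 from Finset.prod_range_zero _, mul_one,
    div_self (pqFact_pos hp hq n).ne']

lemma pqChoose_pascal {p q : ℝ} (hp : 0 < p) (hq : 0 < q) {n k : ℕ} (hk : k < n) :
    pqChoose p q (n + 1) (k + 1) =
      q ^ (n - k) * pqChoose p q n k + p ^ (k + 1) * pqChoose p q n (k + 1) := by
  obtain ⟨d, hd⟩ : ∃ d, n - k = d + 1 := ⟨n - k - 1, by omega⟩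
  have hnk : n - (k + 1) = d := by omega
  have hn1 : n + 1 - (k + 1) = d + 1 := by omega
  have key : pqInt p q (n + 1) =
      q ^ (d + 1) * pqInt p q (k + 1) + p ^ (k + 1) * pqInt p q (d + 1) := by
    have := pqInt_split p q (k + 1) (d + 1)
    rwa [show k + 1 + (d + 1) = n + 1 by omega] at this
  unfold pqChoose
  rw [hd, hnk, hn1, pqFact_succ p q n, pqFact_succ p q k, pqFact_succ p q d, key]
  have h1 := (pqFact_pos hp hq n).ne'
  have h2 := (pqFact_pos hp hq k).ne'
  have h3 := (pqFact_pos hp hq d).ne'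
  have h4 := (pqInt_pos hp hq k).ne'
  have h5 := (pqInt_pos hp hq d).ne'
  field_simp

lemma tri (n : ℕ) : (n + 1) * n / 2 = n * (n - 1) / 2 + n := by
  have h1 : (n + 1) * n / 2 = (n + 1).choose 2 := by
    rw [Nat.choose_two_right]; simp
  have h2 : n * (n - 1) / 2 = n.choose 2 := (Nat.choose_two_right n).symm
  rw [h1, h2, Nat.choose_succ_succ, Nat.choose_one_right, add_comm]

noncomputable def pqT (p q x : ℝ) (n k : ℕ) : ℝ :=
  pqChoose p q n k * p ^ (k * (k - 1) / 2) * x ^ k *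
    ∏ s ∈ Finset.range (n - k), (p ^ s - q ^ s * x)

noncomputable def pqU (p q x : ℝ) (n k : ℕ) : ℝ :=
  q ^ (n - k) * pqChoose p q n k * p ^ ((k + 1) * k / 2) * x ^ (k + 1) *
    ∏ s ∈ Finset.range (n - k), (p ^ s - q ^ s * x)

noncomputable def pqV (p q x : ℝ) (n k : ℕ) : ℝ :=
  p ^ k * pqChoose p q n k * p ^ (k * (k - 1) / 2) * x ^ k *
    ∏ s ∈ Finset.range (n + 1 - k), (p ^ s - q ^ s * x)

lemma pqT_pascal {p q : ℝ} (hp : 0 < p) (hq : 0 < q) (x : ℝ) {n k : ℕ} (hk : k < n) :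
    pqT p q x (n + 1) (k + 1) = pqU p q x n k + pqV p q x n (k + 1) := by
  unfold pqT pqU pqV
  have e1 : n + 1 - (k + 1) = n - k := by omega
  have e2 : (k + 1) * (k + 1 - 1) / 2 = (k + 1) * k / 2 := by simp
  rw [e1, e2, pqChoose_pascal hp hq hk]
  ring

lemma pqT_zero {p q : ℝ} (hp : 0 < p) (hq : 0 < q) (x : ℝ) (n : ℕ) :
    pqT p q x (n + 1) 0 = pqV p q x n 0 := by
  unfold pqT pqV
  simp [pqChoose_zero hp hq]

lemma pqT_top {p q : ℝ} (hp : 0 < p) (hq : 0 < q) (x : ℝ) (n : ℕ) :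
    pqT p q x (n + 1) (n + 1) = pqU p q x n n := by
  unfold pqT pqU
  simp [pqChoose_self hp hq]

lemma pqUV {p q : ℝ} (hp : 0 < p) (hq : 0 < q) (x : ℝ) {n k : ℕ} (hk : k ≤ n) :
    pqU p q x n k + pqV p q x n k = p ^ n * pqT p q x n k := by
  unfold pqT pqU pqV
  have e1 : n + 1 - k = (n - k) + 1 := by omega
  rw [e1, Finset.prod_range_succ, tri k, pow_add]
  have e3 : p ^ k * p ^ (n - k) = p ^ n := by
    rw [← pow_add]; congr 1; omega
  linear_combination (pqChoose p q n k * p ^ (k * (k - 1) / 2) * x ^ k *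
    ∏ s ∈ Finset.range (n - k), (p ^ s - q ^ s * x)) * e3

lemma key_sum {p q : ℝ} (hp : 0 < p) (hq : 0 < q) (x : ℝ) (n : ℕ) :
    ∑ k ∈ Finset.range (n + 1), pqT p q x n k = p ^ (n * (n - 1) / 2) := by
  induction n with
  | zero => simp [pqT, pqChoose_zero hp hq]
  | succ n ih =>
    calc ∑ k ∈ Finset.range (n + 1 + 1), pqT p q x (n + 1) k
        = (∑ k ∈ Finset.range n, pqT p q x (n + 1) (k + 1) + pqT p q x (n + 1) 0)
            + pqT p q x (n + 1) (n + 1) := by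
          rw [Finset.sum_range_succ, Finset.sum_range_succ']
      _ = (∑ k ∈ Finset.range n, (pqU p q x n k + pqV p q x n (k + 1)) + pqV p q x n 0)
            + pqU p q x n n := by
          rw [pqT_zero hp hq, pqT_top hp hq]
          congr 1
          congr 1
          exact Finset.sum_congr rfl fun k hk =>
            pqT_pascal hp hq x (Finset.mem_range.mp hk)
      _ = (∑ k ∈ Finset.range (n + 1), pqU p q x n k)
            + ∑ k ∈ Finset.range (n + 1), pqV p q x n k := by
          rw [Finset.sum_add_distrib, Finset.sum_range_succ (pqU p q x n),
            Finset.sum_range_succ' (pqV p q x n)]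
          ring
      _ = ∑ k ∈ Finset.range (n + 1), p ^ n * pqT p q x n k := by
          rw [← Finset.sum_add_distrib]
          exact Finset.sum_congr rfl fun k hk =>
            pqUV hp hq x (Nat.lt_succ_iff.mp (Finset.mem_range.mp hk))
      _ = p ^ n * p ^ (n * (n - 1) / 2) := by rw [← Finset.mul_sum, ih]
      _ = p ^ ((n + 1) * (n + 1 - 1) / 2) := by
          rw [← pow_add, Nat.add_sub_cancel, tri n, add_comm]

theorem pq_bernstein_partition (p q x : ℝ) (hq : 0 < q) (hqp : q < p) (hp : p ≤ 1)
    (hx : x ∈ Set.Icc (0 : ℝ) 1) (n : ℕ) (hn : 1 ≤ n) :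
    ∑ k ∈ Finset.range (n + 1),
        pqChoose p q n k * p ^ (k * (k - 1) / 2) * x ^ k *
          ∏ s ∈ Finset.range (n - k), (p ^ s - q ^ s * x) =
      p ^ (n * (n - 1) / 2) := by
  have hp' : 0 < p := hq.trans hqp
  have h := key_sum hp' hq x n
  simpa only [pqT] using h
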